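/- Fix c > 0 and σ ∈ {+1, −1}. For every complex-valued Schwartz function φ on ℝ³ × ℝ, the function r ↦ φ(r, σ‖r‖/c)/‖r‖ is integrable on ℝ³, and there exists a constant C > 0 (independent of φ) such that |∫_{ℝ³} φ(r, σ‖r‖/c)/‖r‖ d³r| ≤ C · sup_{(r,t) ∈ ℝ³×ℝ} (1 + ‖(r,t)‖)³ |φ(r,t)|. In particular, the map φ ↦ −(1/(4π)) ∫_{ℝ³} φ(r, σ‖r‖/c)/‖r‖ d³r is a well-defined continuous linear functional on Schwartz space, i.e., E_{□±} = −δ(t ∓ r/c)/(4πr) are tempered distributions on ℝ³ × ℝ. -/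

import Mathlib

open MeasureTheory Set Metric Measure
open scoped ENNReal NNReal

noncomputable section

abbrev E3 := EuclideanSpace ℝ (Fin 3)

lemma aux_lintegral_norm :
    ∫⁻ (x : E3), ENNReal.ofReal ((‖x‖ * (1 + ‖x‖) ^ 3)⁻¹)
      = (volume : Measure E3).toSphere univ * ∫⁻ (y : Ioi (0:ℝ)),
          ENNReal.ofReal ((y.1 * (1 + y.1) ^ 3)⁻¹) ∂(Measure.volumeIoiPow 2) := by
  set G : ℝ → ℝ≥0∞ := fun y => ENNReal.ofReal ((y * (1 + y) ^ 3)⁻¹) with hG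
  have hGm : Measurable G := by fun_prop
  have hdim : Module.finrank ℝ E3 = 3 := by simp
  calc ∫⁻ (x : E3), G ‖x‖
      = ∫⁻ (x : E3) in ({0}ᶜ : Set E3), G ‖x‖ := by
        rw [MeasureTheory.restrict_compl_singleton]
    _ = ∫⁻ (x : ({0}ᶜ : Set E3)), G ‖x.1‖
          ∂((volume : Measure E3).comap Subtype.val) := by
        rw [lintegral_subtype_comap (measurableSet_singleton 0).compl (fun a => G ‖a‖)]
    _ = ∫⁻ (p : sphere (0:E3) 1 × Ioi (0:ℝ)), G p.2.1
          ∂((volume : Measure E3).toSphere.prod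
              (Measure.volumeIoiPow (Module.finrank ℝ E3 - 1))) := by
        rw [← (Measure.measurePreserving_homeomorphUnitSphereProd
          (volume : Measure E3)).lintegral_comp (f := fun p => G p.2.1) (by fun_prop)]
        simp
    _ = (volume : Measure E3).toSphere univ * ∫⁻ (y : Ioi (0:ℝ)), G y.1
          ∂(Measure.volumeIoiPow 2) := by
        rw [hdim]
        rw [MeasureTheory.lintegral_prod _ (by fun_prop)]
        simp [lintegral_const]
        ring

end
noncomputable section
lemma aux_finite :
    ∫⁻ (y : Ioi (0:ℝ)), ENNReal.ofReal ((y.1 * (1 + y.1) ^ 3)⁻¹)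
      ∂(Measure.volumeIoiPow 2) < ∞ := by
  rw [Measure.volumeIoiPow, lintegral_withDensity_eq_lintegral_mul _ (by fun_prop) (by fun_prop)]
  simp only [Pi.mul_apply]
  rw [lintegral_subtype_comap measurableSet_Ioi
    (fun a : ℝ => ENNReal.ofReal (a ^ 2) * ENNReal.ofReal ((a * (1 + a) ^ 3)⁻¹))]
  have hb : ∀ y ∈ Ioi (0:ℝ), ENNReal.ofReal (y ^ 2) * ENNReal.ofReal ((y * (1 + y) ^ 3)⁻¹)
      ≤ ENNReal.ofReal ((1 + ‖y‖) ^ (-2 : ℝ)) := by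
    intro y hy
    rw [mem_Ioi] at hy
    rw [← ENNReal.ofReal_mul (by positivity)]
    apply ENNReal.ofReal_le_ofReal
    have h1y : (0:ℝ) < 1 + y := by linarith
    rw [Real.norm_eq_abs, abs_of_pos hy, Real.rpow_neg h1y.le,
      show (2:ℝ) = ((2:ℕ):ℝ) from by norm_num, Real.rpow_natCast]
    rw [mul_inv, ← mul_assoc]
    have : y ^ 2 * y⁻¹ = y := by field_simp
    rw [this]
    rw [show ((1+y)^3)⁻¹ = ((1+y)⁻¹)^3 from by rw [inv_pow], show ((1+y)^2)⁻¹ = ((1+y)⁻¹)^2 from by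
      rw [inv_pow]]
    calc y * ((1+y)⁻¹)^3 ≤ (1+y) * ((1+y)⁻¹)^3 := by
          apply mul_le_mul_of_nonneg_right (by linarith) (by positivity)
      _ = ((1+y)⁻¹)^2 := by field_simp
  calc ∫⁻ y in Ioi (0:ℝ), ENNReal.ofReal (y ^ 2) * ENNReal.ofReal ((y * (1 + y) ^ 3)⁻¹)
      ≤ ∫⁻ y in Ioi (0:ℝ), ENNReal.ofReal ((1 + ‖y‖) ^ (-2 : ℝ)) :=
        setLIntegral_mono (by fun_prop) hb
    _ ≤ ∫⁻ (y : ℝ), ENNReal.ofReal ((1 + ‖y‖) ^ (-2 : ℝ)) := setLIntegral_le_lintegral _ _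
    _ < ∞ := finite_integral_one_add_norm (by simp : ((Module.finrank ℝ ℝ : ℝ)) < 2)
end
noncomputable section
lemma aux_integrable : Integrable (fun x : E3 => (‖x‖ * (1 + ‖x‖) ^ 3)⁻¹) := by
  refine ⟨(by fun_prop : Measurable fun x : E3 => (‖x‖ * (1 + ‖x‖) ^ 3)⁻¹).aestronglyMeasurable,
    ?_⟩
  rw [hasFiniteIntegral_iff_ofReal (Filter.Eventually.of_forall fun x => by positivity)]
  rw [aux_lintegral_norm]
  exact ENNReal.mul_lt_top (measure_lt_top _ _) aux_finite
end

noncomputable section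

/-- Fix `c > 0` and `σ ∈ {+1, −1}`. For every Schwartz function `φ` on `ℝ³ × ℝ`,
the function `r ↦ φ(r, σ‖r‖/c)/‖r‖` is integrable on ℝ³, and there is a constant
`C > 0` independent of `φ` with
`‖∫_{ℝ³} φ(r, σ‖r‖/c)/‖r‖ d³r‖ ≤ C ⬝ sup_{(r,t)} (1 + ‖(r,t)‖)³ ‖φ(r,t)‖`.
Hence `φ ↦ −(1/(4π)) ∫ φ(r, σ‖r‖/c)/‖r‖ d³r` is a continuous linear functional
on Schwartz space, i.e. `E_{□±} = −δ(t ∓ r/c)/(4πr)` are tempered distributions. -/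
theorem spherical_wave_is_tempered_distribution
    (c σ : ℝ) (hc : 0 < c) (hσ : σ = 1 ∨ σ = -1) :
    (∀ φ : SchwartzMap (EuclideanSpace ℝ (Fin 3) × ℝ) ℂ,
      Integrable (fun r : EuclideanSpace ℝ (Fin 3) => φ (r, σ * ‖r‖ / c) / (‖r‖ : ℂ))) ∧
    ∃ C > (0 : ℝ), ∀ φ : SchwartzMap (EuclideanSpace ℝ (Fin 3) × ℝ) ℂ,
      ‖∫ r : EuclideanSpace ℝ (Fin 3), φ (r, σ * ‖r‖ / c) / (‖r‖ : ℂ)‖ ≤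
        C * ⨆ X : EuclideanSpace ℝ (Fin 3) × ℝ, (1 + ‖X‖) ^ 3 * ‖φ X‖ := by
  set g : E3 → ℝ := fun r => (‖r‖ * (1 + ‖r‖) ^ 3)⁻¹ with hg
  have hg0 : ∀ r : E3, 0 ≤ g r := fun r => by positivity
  -- basic facts about the sup
  have hMb : ∀ φ : SchwartzMap (E3 × ℝ) ℂ,
      BddAbove (Set.range fun X : E3 × ℝ => (1 + ‖X‖) ^ 3 * ‖φ X‖) := by
    intro φ
    refine ⟨2 ^ 3 * ((Finset.Iic ((3 : ℕ), (0 : ℕ))).sup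
      (fun m => SchwartzMap.seminorm ℝ m.1 m.2) φ), ?_⟩
    rintro _ ⟨X, rfl⟩
    have := SchwartzMap.one_add_le_sup_seminorm_apply (𝕜 := ℝ) (m := ((3:ℕ), (0:ℕ)))
      le_rfl le_rfl φ X
    simpa [norm_iteratedFDeriv_zero] using this
  have hM0 : ∀ φ : SchwartzMap (E3 × ℝ) ℂ,
      0 ≤ ⨆ X : E3 × ℝ, (1 + ‖X‖) ^ 3 * ‖φ X‖ :=
    fun φ => Real.iSup_nonneg fun X => by positivity
  -- pointwise bound
  have hpt : ∀ (φ : SchwartzMap (E3 × ℝ) ℂ) (r : E3),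
      ‖φ (r, σ * ‖r‖ / c) / (‖r‖ : ℂ)‖ ≤
        (⨆ X : E3 × ℝ, (1 + ‖X‖) ^ 3 * ‖φ X‖) * g r := by
    intro φ r
    set M := ⨆ X : E3 × ℝ, (1 + ‖X‖) ^ 3 * ‖φ X‖ with hM
    by_cases hr : r = 0
    · simp [hr, hg]
    · have hrp : 0 < ‖r‖ := norm_pos_iff.mpr hr
      set X : E3 × ℝ := (r, σ * ‖r‖ / c) with hX
      have hkey : (1 + ‖r‖) ^ 3 * ‖φ X‖ ≤ M := by
        refine le_trans ?_ (le_ciSup (hMb φ) X)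
        have h1 : ‖r‖ ≤ ‖X‖ := norm_fst_le X
        gcongr <;> linarith
      rw [norm_div, Complex.norm_real, Real.norm_eq_abs, abs_of_nonneg (norm_nonneg r)]
      rw [div_le_iff₀ hrp]
      have hrhs : M * g r * ‖r‖ = M / (1 + ‖r‖) ^ 3 := by
        rw [hg]
        field_simp
      rw [hrhs, le_div_iff₀ (by positivity)]
      linarith [hkey]
  -- a.e. strong measurability
  have hmeas : ∀ φ : SchwartzMap (E3 × ℝ) ℂ,
      AEStronglyMeasurable (fun r : E3 => φ (r, σ * ‖r‖ / c) / (‖r‖ : ℂ)) volume := by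
    intro φ
    have h1 : Continuous fun r : E3 => φ (r, σ * ‖r‖ / c) :=
      φ.continuous.comp (by fun_prop)
    exact (h1.measurable.div (by fun_prop)).aestronglyMeasurable
  have hint : ∀ φ : SchwartzMap (E3 × ℝ) ℂ,
      Integrable (fun r : E3 => φ (r, σ * ‖r‖ / c) / (‖r‖ : ℂ)) := by
    intro φ
    exact (aux_integrable.const_mul _).mono' (hmeas φ)
      (Filter.Eventually.of_forall (hpt φ))
  have hIg0 : (0:ℝ) ≤ ∫ r : E3, g r := integral_nonneg hg0
  refine ⟨hint, (∫ r : E3, g r) + 1, by linarith, ?_⟩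
  · intro φ
    set M := ⨆ X : E3 × ℝ, (1 + ‖X‖) ^ 3 * ‖φ X‖ with hM
    have hIg : (0:ℝ) ≤ ∫ r : E3, g r := integral_nonneg hg0
    calc ‖∫ r : E3, φ (r, σ * ‖r‖ / c) / (‖r‖ : ℂ)‖
        ≤ ∫ r : E3, ‖φ (r, σ * ‖r‖ / c) / (‖r‖ : ℂ)‖ := norm_integral_le_integral_norm _
      _ ≤ ∫ r : E3, M * g r :=
          integral_mono ((hint φ).norm) (aux_integrable.const_mul M) (hpt φ)
      _ = M * ∫ r : E3, g r := integral_const_mul M g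
      _ ≤ ((∫ r : E3, g r) + 1) * M := by nlinarith [hM0 φ]
end
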